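/- Let ψ(x) = log(1 + |x|^{2n}) and define 𝔉(x) = ½ Σ_{i,j=1}^d ( (∂ψ/∂x_i)(∂ψ/∂x_j) + ∂²ψ/∂x_i∂x_j ) a^{ij}(x) + Σ_{i=1}^d f_i(x) ∂ψ/∂x_i. If f: ℝ^d → ℝ^d is L-Lipschitz and |a^{ij}(x)| ≤ L for all i, j and x, then for all x ∈ ℝ^d: |𝔉(x)| ≤ d²(4n² + n)L + n(L² + 1) + n|f(0)|² + 2nL|f(0)|. -/

import Mathlib

open Real

/-- The partial derivative `∂u/∂xᵢ` of a function `u : ℝ^d → ℝ`. -/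
noncomputable def pd {d : ℕ} (i : Fin d) (u : EuclideanSpace ℝ (Fin d) → ℝ) :
    EuclideanSpace ℝ (Fin d) → ℝ :=
  fun x => fderiv ℝ u x (EuclideanSpace.single i 1)

/-- g n t = 2n t^{n-1}/(1+t^n), the factor so that ∇ψ(x) = g(‖x‖²) x. -/
noncomputable def myg (n : ℕ) (t : ℝ) : ℝ := 2 * n * t ^ (n - 1) / (1 + t ^ n)

/-- derivative of myg. -/
noncomputable def myE (n : ℕ) (t : ℝ) : ℝ :=
  (2 * n * ((n - 1 : ℕ) * t ^ (n - 1 - 1)) * (1 + t ^ n)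
    - 2 * n * t ^ (n - 1) * ((n : ℝ) * t ^ (n - 1))) / (1 + t ^ n) ^ 2

lemma psi_hasFDerivAt {d : ℕ} (n : ℕ) (x : EuclideanSpace ℝ (Fin d)) :
    HasFDerivAt (fun y : EuclideanSpace ℝ (Fin d) => Real.log (1 + ‖y‖ ^ (2 * n)))
      (((n : ℝ) * (‖x‖ ^ 2) ^ (n - 1) / (1 + (‖x‖ ^ 2) ^ n)) • (2 • (innerSL ℝ x))) x := by
  have hq : HasFDerivAt (fun y : EuclideanSpace ℝ (Fin d) => ‖y‖ ^ 2)
      (2 • (innerSL ℝ x)) x := (hasStrictFDerivAt_norm_sq x).hasFDerivAt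
  set t := ‖x‖ ^ 2 with htdef
  have hpos : (0:ℝ) < 1 + t ^ n := by positivity
  have h1 : HasDerivAt (fun s : ℝ => 1 + s ^ n) ((n : ℝ) * t ^ (n - 1)) t :=
    (hasDerivAt_pow n t).const_add 1
  have hlog : HasDerivAt (fun s : ℝ => Real.log (1 + s ^ n))
      ((1 + t ^ n)⁻¹ * ((n : ℝ) * t ^ (n - 1))) t :=
    by have := (Real.hasDerivAt_log hpos.ne').comp t h1; exact this
  have h2 := hlog.comp_hasFDerivAt x hq
  have heq : ((fun s : ℝ => Real.log (1 + s ^ n)) ∘ fun y : EuclideanSpace ℝ (Fin d) => ‖y‖ ^ 2)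
      = fun y => Real.log (1 + ‖y‖ ^ (2 * n)) := by
    funext y; simp [Function.comp, pow_mul]
  rw [heq] at h2
  rw [div_eq_inv_mul]
  exact h2

lemma myg_hasDerivAt (n : ℕ) (t : ℝ) (ht : 0 ≤ t) : HasDerivAt (myg n) (myE n t) t := by
  have hpos : (0:ℝ) < 1 + t ^ n := by positivity
  have hc : HasDerivAt (fun s : ℝ => 2 * (n:ℝ) * s ^ (n - 1))
      (2 * (n:ℝ) * ((n - 1 : ℕ) * t ^ (n - 1 - 1))) t :=
    (hasDerivAt_pow (n - 1) t).const_mul (2 * (n:ℝ))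
  have hd : HasDerivAt (fun s : ℝ => 1 + s ^ n) ((n : ℝ) * t ^ (n - 1)) t :=
    (hasDerivAt_pow n t).const_add 1
  exact hc.div hd hpos.ne'

/-- First derivative formula. -/
lemma pd_psi {d : ℕ} (n : ℕ)
    (ψ : EuclideanSpace ℝ (Fin d) → ℝ)
    (hψ : ∀ x, ψ x = Real.log (1 + ‖x‖ ^ (2 * n)))
    (j : Fin d) (y : EuclideanSpace ℝ (Fin d)) :
    pd j ψ y = myg n (‖y‖ ^ 2) * y j := by
  have hψ' : ψ = fun y => Real.log (1 + ‖y‖ ^ (2 * n)) := funext hψ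
  have h := (psi_hasFDerivAt n y).fderiv
  rw [pd, hψ', h]
  have : ((innerSL ℝ) y) (EuclideanSpace.single j 1) = y j := by
    simp [EuclideanSpace.inner_single_right]
  simp only [ContinuousLinearMap.coe_smul', Pi.smul_apply, ContinuousLinearMap.smul_apply, this,
    smul_eq_mul]
  rw [myg]
  ring

/-- Second derivative formula. -/
lemma pd_pd_psi {d : ℕ} (n : ℕ)
    (ψ : EuclideanSpace ℝ (Fin d) → ℝ)
    (hψ : ∀ x, ψ x = Real.log (1 + ‖x‖ ^ (2 * n)))
    (i j : Fin d) (x : EuclideanSpace ℝ (Fin d)) :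
    pd i (pd j ψ) x = myE n (‖x‖ ^ 2) * (2 * x i) * x j
      + myg n (‖x‖ ^ 2) * (if i = j then 1 else 0) := by
  have hfun : pd j ψ = fun y => myg n (‖y‖ ^ 2) * y j := funext (pd_psi n ψ hψ j)
  have hq : HasFDerivAt (fun y : EuclideanSpace ℝ (Fin d) => ‖y‖ ^ 2)
      (2 • (innerSL ℝ x)) x := (hasStrictFDerivAt_norm_sq x).hasFDerivAt
  have hG : HasFDerivAt (fun y : EuclideanSpace ℝ (Fin d) => myg n (‖y‖ ^ 2))
      (myE n (‖x‖ ^ 2) • (2 • (innerSL ℝ x))) x :=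
    by have := (myg_hasDerivAt n (‖x‖ ^ 2) (by positivity)).comp_hasFDerivAt x hq; exact this
  have hproj : HasFDerivAt (fun y : EuclideanSpace ℝ (Fin d) => y j)
      (EuclideanSpace.proj j : EuclideanSpace ℝ (Fin d) →L[ℝ] ℝ) x :=
    (EuclideanSpace.proj j : EuclideanSpace ℝ (Fin d) →L[ℝ] ℝ).hasFDerivAt
  have hmul : HasFDerivAt (fun y : EuclideanSpace ℝ (Fin d) => myg n (‖y‖ ^ 2) * y j)
      (myg n (‖x‖ ^ 2) • (EuclideanSpace.proj j : EuclideanSpace ℝ (Fin d) →L[ℝ] ℝ)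
        + x j • myE n (‖x‖ ^ 2) • 2 • (innerSL ℝ) x) x := hG.mul hproj
  rw [pd, hfun, hmul.fderiv]
  have h1 : ((innerSL ℝ) x) (EuclideanSpace.single i 1) = x i := by
    simp [EuclideanSpace.inner_single_right]
  have h2 : (EuclideanSpace.proj j : EuclideanSpace ℝ (Fin d) →L[ℝ] ℝ) (EuclideanSpace.single i 1)
      = (if i = j then (1:ℝ) else 0) := by
    simp [EuclideanSpace.single_apply, eq_comm]
  simp only [ContinuousLinearMap.add_apply, ContinuousLinearMap.coe_smul', Pi.smul_apply,
    ContinuousLinearMap.smul_apply, h1, h2, smul_eq_mul]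
  ring

lemma key_pow (r : ℝ) (hr : 0 ≤ r) {k m : ℕ} (h : k ≤ m) : r ^ k ≤ 1 + r ^ m := by
  rcases le_total r 1 with h1 | h1
  · nlinarith [pow_le_one₀ hr h1 (n := k), pow_nonneg hr m]
  · nlinarith [pow_le_pow_right₀ h1 h]

lemma myg_nonneg (n : ℕ) (t : ℝ) (ht : 0 ≤ t) : 0 ≤ myg n t := by
  rw [myg]; positivity

lemma myg_mul_r (n : ℕ) (hn : 1 ≤ n) (r : ℝ) (hr : 0 ≤ r) :
    myg n (r ^ 2) * r ≤ 2 * n := by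
  obtain ⟨m, rfl⟩ : ∃ m, n = m + 1 := ⟨n - 1, (Nat.succ_pred_eq_of_pos hn).symm⟩
  have hQ : (0:ℝ) < 1 + r ^ (2 * m + 2) := by positivity
  have e1 : ((r ^ 2) ^ m) * r = r ^ (2 * m + 1) := by
    rw [← pow_mul, ← pow_succ]
  have e2 : (r ^ 2) ^ (m + 1) = r ^ (2 * m + 2) := by
    rw [← pow_mul]; ring_nf
  have hk : r ^ (2 * m + 1) ≤ 1 + r ^ (2 * m + 2) := key_pow r hr (by omega)
  rw [myg, Nat.add_sub_cancel, e2, div_mul_eq_mul_div, div_le_iff₀ hQ]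
  push_cast
  nlinarith [hk, hQ, e1, pow_nonneg hr (2 * m + 1)]

lemma myg_mul_r2 (n : ℕ) (hn : 1 ≤ n) (r : ℝ) (hr : 0 ≤ r) :
    myg n (r ^ 2) * r ^ 2 ≤ 2 * n := by
  obtain ⟨m, rfl⟩ : ∃ m, n = m + 1 := ⟨n - 1, (Nat.succ_pred_eq_of_pos hn).symm⟩
  have hQ : (0:ℝ) < 1 + (r ^ 2) ^ (m + 1) := by positivity
  have e1 : ((r ^ 2) ^ m) * r ^ 2 = (r ^ 2) ^ (m + 1) := (pow_succ _ _).symm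
  rw [myg, Nat.add_sub_cancel, div_mul_eq_mul_div, div_le_iff₀ hQ]
  push_cast
  nlinarith [hQ, e1, pow_nonneg (by positivity : (0:ℝ) ≤ r ^ 2) (m + 1)]

lemma myg_le (n : ℕ) (hn : 1 ≤ n) (r : ℝ) (hr : 0 ≤ r) :
    myg n (r ^ 2) ≤ 2 * n := by
  obtain ⟨m, rfl⟩ : ∃ m, n = m + 1 := ⟨n - 1, (Nat.succ_pred_eq_of_pos hn).symm⟩
  have hQ : (0:ℝ) < 1 + (r ^ 2) ^ (m + 1) := by positivity
  have hk : (r ^ 2) ^ m ≤ 1 + (r ^ 2) ^ (m + 1) :=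
    key_pow (r ^ 2) (by positivity) (Nat.le_succ m)
  rw [myg, Nat.add_sub_cancel, div_le_iff₀ hQ]
  push_cast
  nlinarith [hk, hQ]

lemma myE_bound (n : ℕ) (hn : 1 ≤ n) (t : ℝ) (ht : 0 ≤ t) :
    |myE n t| * (2 * t) ≤ 4 * (n : ℝ) ^ 2 := by
  obtain ⟨m, rfl⟩ : ∃ m, n = m + 1 := ⟨n - 1, (Nat.succ_pred_eq_of_pos hn).symm⟩
  have hs : (0:ℝ) ≤ t ^ m := pow_nonneg ht m
  have hu : (0:ℝ) ≤ t ^ (m + 1) := pow_nonneg ht (m + 1)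
  have hQ : (0:ℝ) < 1 + t ^ (m + 1) := by positivity
  have hus : t ^ (m + 1) = t * t ^ m := by rw [pow_succ]; ring
  have hid : ((m:ℝ)) * (t * t ^ (m - 1)) = (m : ℝ) * t ^ m := by
    cases m with
    | zero => simp
    | succ k => rw [show k + 1 - 1 = k from rfl, ← pow_succ']
  rw [myE, Nat.add_sub_cancel, abs_div, abs_of_pos (by positivity : (0:ℝ) < (1 + t ^ (m+1)) ^ 2),
    div_mul_eq_mul_div, div_le_iff₀ (by positivity)]
  have hN : (2 * ((m:ℝ)+1) * ((m:ℝ) * t ^ (m - 1)) * (1 + t ^ (m+1))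
      - 2 * ((m:ℝ)+1) * t ^ m * (((m:ℝ)+1) * t ^ m)) * (2 * t)
      = 4 * ((m:ℝ)+1) * t ^ m * ((m:ℝ) - t ^ (m+1)) := by
    have h2 : t * ((m:ℝ) * t ^ (m-1)) = (m:ℝ) * t ^ m := by
      rw [← hid]; ring
    calc (2 * ((m:ℝ)+1) * ((m:ℝ) * t ^ (m - 1)) * (1 + t ^ (m+1))
      - 2 * ((m:ℝ)+1) * t ^ m * (((m:ℝ)+1) * t ^ m)) * (2 * t)
        = 4 * ((m:ℝ)+1) * (1 + t ^ (m+1)) * (t * ((m:ℝ) * t ^ (m-1)))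
          - 4 * ((m:ℝ)+1) ^ 2 * t ^ m * (t * t ^ m) := by ring
      _ = 4 * ((m:ℝ)+1) * (1 + t ^ (m+1)) * ((m:ℝ) * t ^ m)
          - 4 * ((m:ℝ)+1) ^ 2 * t ^ m * t ^ (m+1) := by rw [h2, ← hus]
      _ = 4 * ((m:ℝ)+1) * t ^ m * ((m:ℝ) - t ^ (m+1)) := by ring
  have hcast : ((m + 1 : ℕ) : ℝ) = (m : ℝ) + 1 := by push_cast; ring
  rw [hcast]
  have h1 : |(2 * ((m:ℝ)+1) * ((m:ℝ) * t ^ (m - 1)) * (1 + t ^ (m+1))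
      - 2 * ((m:ℝ)+1) * t ^ m * (((m:ℝ)+1) * t ^ m))| * (2 * t)
      = 4 * ((m:ℝ)+1) * t ^ m * |(m:ℝ) - t ^ (m+1)| := by
    rw [← abs_of_nonneg (show (0:ℝ) ≤ 2 * t by linarith), ← abs_mul, hN, abs_mul,
      abs_of_nonneg (by positivity : (0:ℝ) ≤ 4 * ((m:ℝ)+1) * t ^ m)]
  rw [h1]
  have habs : |(m:ℝ) - t ^ (m+1)| ≤ ((m:ℝ)+1) * (1 + t ^ (m+1)) := by
    rw [abs_le]; constructor <;> nlinarith [hu, Nat.cast_nonneg (α := ℝ) m]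
  have hsQ : t ^ m ≤ 1 + t ^ (m + 1) := key_pow t ht (Nat.le_succ m)
  nlinarith [mul_le_mul hsQ habs (abs_nonneg _) (by positivity : (0:ℝ) ≤ 1 + t ^ (m+1)),
    abs_nonneg ((m:ℝ) - t ^ (m+1)), Nat.cast_nonneg (α := ℝ) m]

/-- With `ψ(x) = log(1+|x|^{2n})` and
`𝔉(x) = ½ Σᵢⱼ((∂ψ/∂xᵢ)(∂ψ/∂xⱼ) + ∂²ψ/∂xᵢ∂xⱼ) aⁱʲ(x) + Σᵢ fᵢ(x) ∂ψ/∂xᵢ`,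
if `f` is `L`-Lipschitz and `|aⁱʲ(x)| ≤ L`, then
`|𝔉(x)| ≤ d²(4n²+n)L + n(L²+1) + n|f(0)|² + 2nL|f(0)|` for all `x`. -/
theorem statement9 {d : ℕ} (n : ℕ) (hn : 1 ≤ n) (L : ℝ) (hL : 0 < L)
    (f : EuclideanSpace ℝ (Fin d) → EuclideanSpace ℝ (Fin d))
    (a : Fin d → Fin d → EuclideanSpace ℝ (Fin d) → ℝ)
    (hf : ∀ x y, ‖f x - f y‖ ≤ L * ‖x - y‖)
    (ha : ∀ i j x, |a i j x| ≤ L)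
    (ψ 𝔉 : EuclideanSpace ℝ (Fin d) → ℝ)
    (hψ : ∀ x, ψ x = Real.log (1 + ‖x‖ ^ (2 * n)))
    (h𝔉 : ∀ x, 𝔉 x =
      (1 / 2) * ∑ i, ∑ j, (pd i ψ x * pd j ψ x + pd i (pd j ψ) x) * a i j x
        + ∑ i, f x i * pd i ψ x) :
    ∀ x, |𝔉 x| ≤ (d : ℝ) ^ 2 * (4 * (n : ℝ) ^ 2 + n) * L + n * (L ^ 2 + 1)
        + n * ‖f 0‖ ^ 2 + 2 * n * L * ‖f 0‖ := by
  intro x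
  have hn1 : (1:ℝ) ≤ (n:ℝ) := by exact_mod_cast hn
  have hr0 : (0:ℝ) ≤ ‖x‖ := norm_nonneg x
  have hg0 : 0 ≤ myg n (‖x‖ ^ 2) := myg_nonneg n _ (by positivity)
  have hcoord : ∀ k : Fin d, |x k| ≤ ‖x‖ := by
    intro k
    have h := abs_real_inner_le_norm x (EuclideanSpace.single k 1)
    simpa [EuclideanSpace.inner_single_right] using h
  -- first derivative bound
  have hpd : ∀ k, |pd k ψ x| ≤ 2 * n := by
    intro k
    rw [pd_psi n ψ hψ, abs_mul, abs_of_nonneg hg0]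
    calc myg n (‖x‖ ^ 2) * |x k| ≤ myg n (‖x‖ ^ 2) * ‖x‖ :=
          mul_le_mul_of_nonneg_left (hcoord k) hg0
      _ ≤ 2 * n := myg_mul_r n hn ‖x‖ hr0
  -- second derivative bound
  have hpd2 : ∀ i j, |pd i (pd j ψ) x| ≤ 4 * (n:ℝ) ^ 2 + 2 * n := by
    intro i j
    rw [pd_pd_psi n ψ hψ]
    refine (abs_add_le _ _).trans ?_
    have h1 : |myE n (‖x‖ ^ 2) * (2 * x i) * x j| ≤ 4 * (n:ℝ) ^ 2 := by
      rw [abs_mul, abs_mul, abs_mul]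
      have hE := myE_bound n hn (‖x‖ ^ 2) (by positivity)
      have hi := hcoord i
      have hj := hcoord j
      have habs : |(2:ℝ)| = 2 := by norm_num
      rw [habs]
      calc |myE n (‖x‖ ^ 2)| * (2 * |x i|) * |x j|
          ≤ |myE n (‖x‖ ^ 2)| * (2 * ‖x‖) * ‖x‖ := by
            apply mul_le_mul
            · exact mul_le_mul_of_nonneg_left (by linarith) (abs_nonneg _)
            · exact hj
            · exact abs_nonneg _
            · positivity
        _ = |myE n (‖x‖ ^ 2)| * (2 * ‖x‖ ^ 2) := by ring
        _ ≤ 4 * (n:ℝ) ^ 2 := hE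
    have h2 : |myg n (‖x‖ ^ 2) * (if i = j then (1:ℝ) else 0)| ≤ 2 * n := by
      rw [abs_mul, abs_of_nonneg hg0]
      have : |(if i = j then (1:ℝ) else 0)| ≤ 1 := by split_ifs <;> norm_num
      calc myg n (‖x‖ ^ 2) * |(if i = j then (1:ℝ) else 0)|
          ≤ myg n (‖x‖ ^ 2) * 1 := mul_le_mul_of_nonneg_left this hg0
        _ = myg n (‖x‖ ^ 2) := mul_one _
        _ ≤ 2 * n := myg_le n hn ‖x‖ hr0
    linarith
  -- bound for the double sum
  have hterm : ∀ i j : Fin d, |(pd i ψ x * pd j ψ x + pd i (pd j ψ) x) * a i j x|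
      ≤ (8 * (n:ℝ) ^ 2 + 2 * n) * L := by
    intro i j
    rw [abs_mul]
    have h1 : |pd i ψ x * pd j ψ x + pd i (pd j ψ) x| ≤ 8 * (n:ℝ) ^ 2 + 2 * n := by
      refine (abs_add_le _ _).trans ?_
      rw [abs_mul]
      have hi := hpd i
      have hj := hpd j
      have hij := hpd2 i j
      nlinarith [abs_nonneg (pd i ψ x), abs_nonneg (pd j ψ x)]
    exact mul_le_mul h1 (ha i j x) (abs_nonneg _) (by positivity)
  have hS1 : |∑ i, ∑ j, (pd i ψ x * pd j ψ x + pd i (pd j ψ) x) * a i j x|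
      ≤ (d:ℝ) ^ 2 * ((8 * (n:ℝ) ^ 2 + 2 * n) * L) := by
    calc |∑ i, ∑ j, (pd i ψ x * pd j ψ x + pd i (pd j ψ) x) * a i j x|
        ≤ ∑ i, |∑ j, (pd i ψ x * pd j ψ x + pd i (pd j ψ) x) * a i j x| :=
          Finset.abs_sum_le_sum_abs _ _
      _ ≤ ∑ i : Fin d, ∑ j : Fin d, |(pd i ψ x * pd j ψ x + pd i (pd j ψ) x) * a i j x| :=
          Finset.sum_le_sum fun i _ => Finset.abs_sum_le_sum_abs _ _
      _ ≤ ∑ _i : Fin d, ∑ _j : Fin d, (8 * (n:ℝ) ^ 2 + 2 * n) * L :=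
          Finset.sum_le_sum fun i _ => Finset.sum_le_sum fun j _ => hterm i j
      _ = (d:ℝ) ^ 2 * ((8 * (n:ℝ) ^ 2 + 2 * n) * L) := by
          simp [Finset.sum_const, Finset.card_univ]
          ring
  -- drift term
  have hS2 : |∑ i, f x i * pd i ψ x| ≤ 2 * n * L + 2 * n * ‖f 0‖ := by
    have he : ∑ i, f x i * pd i ψ x = myg n (‖x‖ ^ 2) * ∑ i, f x i * x i := by
      rw [Finset.mul_sum]
      refine Finset.sum_congr rfl fun i _ => ?_
      rw [pd_psi n ψ hψ]
      ring
    have hinner : ∑ i, f x i * x i = (inner ℝ (f x) x : ℝ) := by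
      simp [PiLp.inner_apply, RCLike.inner_apply, conj_trivial, mul_comm]
    have hfx : ‖f x‖ ≤ L * ‖x‖ + ‖f 0‖ := by
      have h := hf x 0
      rw [sub_zero] at h
      calc ‖f x‖ ≤ ‖f x - f 0‖ + ‖f 0‖ := by have := norm_sub_norm_le (f x) (f 0); linarith [abs_le.mp (abs_norm_sub_norm_le (f x) (f 0))]
        _ ≤ L * ‖x‖ + ‖f 0‖ := by linarith
    rw [he, hinner, abs_mul, abs_of_nonneg hg0]
    have hcs : |(inner ℝ (f x) x : ℝ)| ≤ ‖f x‖ * ‖x‖ := abs_real_inner_le_norm _ _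
    have hga := myg_mul_r n hn ‖x‖ hr0
    have hgb := myg_mul_r2 n hn ‖x‖ hr0
    have hf0 : (0:ℝ) ≤ ‖f 0‖ := norm_nonneg _
    calc myg n (‖x‖ ^ 2) * |(inner ℝ (f x) x : ℝ)|
        ≤ myg n (‖x‖ ^ 2) * ((L * ‖x‖ + ‖f 0‖) * ‖x‖) := by
          apply mul_le_mul_of_nonneg_left _ hg0
          calc |(inner ℝ (f x) x : ℝ)| ≤ ‖f x‖ * ‖x‖ := hcs
            _ ≤ (L * ‖x‖ + ‖f 0‖) * ‖x‖ := mul_le_mul_of_nonneg_right hfx hr0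
      _ = L * (myg n (‖x‖ ^ 2) * ‖x‖ ^ 2) + ‖f 0‖ * (myg n (‖x‖ ^ 2) * ‖x‖) := by ring
      _ ≤ 2 * n * L + 2 * n * ‖f 0‖ := by nlinarith [hL.le, hf0]
  -- assemble
  rw [h𝔉 x]
  have h2L : 2 * L + 2 * ‖f 0‖ ≤ L ^ 2 + 1 + ‖f 0‖ ^ 2 + 2 * L * ‖f 0‖ := by
    nlinarith [sq_nonneg (L + ‖f 0‖ - 1)]
  calc |(1/2) * ∑ i, ∑ j, (pd i ψ x * pd j ψ x + pd i (pd j ψ) x) * a i j x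
        + ∑ i, f x i * pd i ψ x|
      ≤ |(1/2) * ∑ i, ∑ j, (pd i ψ x * pd j ψ x + pd i (pd j ψ) x) * a i j x|
        + |∑ i, f x i * pd i ψ x| := abs_add_le _ _
    _ = (1/2) * |∑ i, ∑ j, (pd i ψ x * pd j ψ x + pd i (pd j ψ) x) * a i j x|
        + |∑ i, f x i * pd i ψ x| := by rw [abs_mul]; norm_num
    _ ≤ (1/2) * ((d:ℝ) ^ 2 * ((8 * (n:ℝ) ^ 2 + 2 * n) * L)) + (2 * n * L + 2 * n * ‖f 0‖) :=
        add_le_add (mul_le_mul_of_nonneg_left hS1 (by norm_num)) hS2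
    _ ≤ (d : ℝ) ^ 2 * (4 * (n : ℝ) ^ 2 + n) * L + n * (L ^ 2 + 1)
        + n * ‖f 0‖ ^ 2 + 2 * n * L * ‖f 0‖ := by
        nlinarith [mul_le_mul_of_nonneg_left h2L (by positivity : (0:ℝ) ≤ (n:ℝ))]
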